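/- There is a Borel function from 𝒜𝒢 to 𝒜𝒢_TF × ℕ^ℕ that assigns to every (code for a) countable abelian group G a pair (H, α), where H codes a countable torsion-free abelian group and α is an automorphism of the group coded by H, such that the quotient group H / (id_H − α)[H] is isomorphic to G, where (id_H − α)[H] denotes the image of the endomorphism h ↦ h − α(h) of H. -/

import Mathlib

/-- `f : ℕ × ℕ → ℕ` codes a group structure on `ℕ` with multiplication
`a · b = f (a, b)`. -/
def IsGroupCode (f : ℕ × ℕ → ℕ) : Prop :=
  (∀ a b c, f (f (a, b), c) = f (a, f (b, c))) ∧
    ∃ e, (∀ a, f (e, a) = a ∧ f (a, e) = a) ∧ ∀ a, ∃ b, f (a, b) = e ∧ f (b, a) = e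

/-- `e` is the identity element of the group coded by `f`. -/
def IsIdentityOf (f : ℕ × ℕ → ℕ) (e : ℕ) : Prop :=
  ∀ a, f (e, a) = a ∧ f (a, e) = a

/-- `φ` is a homomorphism from the group coded by `f` to the group coded by `g`. -/
def IsHomCode (f g : ℕ × ℕ → ℕ) (φ : ℕ → ℕ) : Prop :=
  ∀ a b, φ (f (a, b)) = g (φ a, φ b)

/-- `codePow f x n` is the power `x^(n+1)` in the group coded by `f`. -/
def codePow (f : ℕ × ℕ → ℕ) (x : ℕ) : ℕ → ℕ
  | 0 => x
  | n + 1 => f (x, codePow f x n)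

/-- The set `𝒜𝒢` of codes for abelian groups. -/
def AGCode : Set (ℕ × ℕ → ℕ) :=
  {f | IsGroupCode f ∧ ∀ a b, f (a, b) = f (b, a)}

/-- The group coded by `f` is torsion-free: `x^n = e` for some `n ≥ 1` implies `x = e`. -/
def IsTorsionFreeCode (f : ℕ × ℕ → ℕ) : Prop :=
  ∀ e, IsIdentityOf f e → ∀ x n, codePow f x n = e → x = e

/-- The set `𝒜𝒢_TF` of codes for torsion-free abelian groups. -/
def AGTFCode : Set (ℕ × ℕ → ℕ) :=
  {f | f ∈ AGCode ∧ IsTorsionFreeCode f}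

noncomputable section StmtAux

namespace StmtAux

/-- A fixed bijection between the free abelian group `ℕ →₀ ℤ` and `ℕ`. -/
def enc : (ℕ →₀ ℤ) ≃ ℕ :=
  letI : Encodable (ℕ →₀ ℤ) := Encodable.ofCountable _
  letI : Denumerable (ℕ →₀ ℤ) := Denumerable.ofEncodableOfInfinite _
  Denumerable.eqv _

/-- Cayley relation vector for pair-code `j`. -/
def relv (f : ℕ × ℕ → ℕ) (j : ℕ) : (ℕ →₀ ℤ) :=
  Finsupp.single (2 * (Nat.unpair j).1) 1 + Finsupp.single (2 * (Nat.unpair j).2) 1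
    - Finsupp.single (2 * f (Nat.unpair j)) 1

def Sb (f : ℕ × ℕ → ℕ) (j : ℕ) : ℕ :=
  max (Nat.unpair j).1 (max (Nat.unpair j).2 (f (Nat.unpair j)))

def wv (f : ℕ × ℕ → ℕ) : ℕ → (ℕ →₀ ℤ)
  | 0 => 0
  | j+1 => relv f j

def sseq (f : ℕ × ℕ → ℕ) : ℕ → ℕ
  | 0 => 0
  | j+1 => max (sseq f j) (Sb f j) + 1

lemma sseq_lt (f : ℕ × ℕ → ℕ) : ∀ j, sseq f j < sseq f (j+1) := by
  intro j; simp [sseq]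

lemma sseq_strictMono (f : ℕ × ℕ → ℕ) : StrictMono (sseq f) :=
  strictMono_nat_of_lt_succ (sseq_lt f)

lemma sseq_ge (f : ℕ × ℕ → ℕ) (j : ℕ) : j ≤ sseq f j := by
  induction j with
  | zero => simp [sseq]
  | succ n ih => have := sseq_lt f n; omega

def tsel (f : ℕ × ℕ → ℕ) (m : ℕ) : ℕ :=
  Nat.findGreatest (fun j => sseq f j < m) m

lemma tsel_spec (f : ℕ × ℕ → ℕ) (m : ℕ) (hm : 1 ≤ m) : sseq f (tsel f m) < m := by
  have := Nat.findGreatest_spec (P := fun j => sseq f j < m) (m := 0) (n := m)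
    (by omega) (by simp [sseq]; omega)
  simpa [tsel] using this

lemma tsel_surj (f : ℕ × ℕ → ℕ) (j : ℕ) : tsel f (sseq f j + 1) = j := by
  have h1 : j ≤ tsel f (sseq f j + 1) :=
    Nat.le_findGreatest (by have := sseq_ge f j; omega) (by omega)
  have h2 : sseq f (tsel f (sseq f j + 1)) < sseq f j + 1 := tsel_spec f _ (by omega)
  have := (sseq_strictMono f).le_iff_le (a := tsel f (sseq f j + 1)) (b := j)
  omega

/-- images of basis vectors under ν -/
def nub (f : ℕ × ℕ → ℕ) (n : ℕ) : (ℕ →₀ ℤ) :=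
  if n = 0 then 0
  else if n % 2 = 0 then Finsupp.single (2 * tsel f (n / 2) + 1) 1
  else wv f (n / 2)

def nu (f : ℕ × ℕ → ℕ) : (ℕ →₀ ℤ) →+ (ℕ →₀ ℤ) :=
  Finsupp.liftAddHom (fun n => zmultiplesHom _ (nub f n))

lemma nu_single (f : ℕ × ℕ → ℕ) (n : ℕ) (c : ℤ) :
    nu f (Finsupp.single n c) = c • nub f n := by
  simp [nu, Finsupp.liftAddHom_apply_single]

def Wt (f : ℕ × ℕ → ℕ) (n : ℕ) : ℕ :=
  if n % 2 = 0 then n + 1 else 2 * sseq f (n / 2) + 2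

lemma Wt_pos (f : ℕ × ℕ → ℕ) (n : ℕ) : 0 < Wt f n := by unfold Wt; split <;> omega

lemma relv_support (f : ℕ × ℕ → ℕ) (j : ℕ) :
    ∀ m ∈ (relv f j).support, ∃ i ≤ Sb f j, m = 2 * i := by
  intro m hm
  rw [relv, sub_eq_add_neg] at hm
  have := Finsupp.support_add hm
  simp only [Finset.mem_union, Finsupp.support_neg] at this
  rcases this with h | h
  · have := Finsupp.support_add h
    simp only [Finset.mem_union] at this
    rcases this with h | h <;>
    · have := Finsupp.support_single_subset h
      simp only [Finset.mem_singleton] at this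
      subst this
      exact ⟨_, by unfold Sb; omega, rfl⟩
  · have := Finsupp.support_single_subset h
    simp only [Finset.mem_singleton] at this
    subst this
    exact ⟨_, by unfold Sb; omega, rfl⟩

lemma nub_wt (f : ℕ × ℕ → ℕ) (n : ℕ) : ∀ m ∈ (nub f n).support, Wt f m < Wt f n := by
  intro m hm
  unfold nub at hm
  split at hm
  · simp at hm
  · rename_i h0
    split at hm
    · rename_i he
      have := Finsupp.support_single_subset hm
      simp only [Finset.mem_singleton] at this
      subst this
      have hm1 : 1 ≤ n / 2 := by omega
      have hts : sseq f (tsel f (n/2)) < n / 2 := tsel_spec f _ hm1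
      have h1 : Wt f (2 * tsel f (n / 2) + 1) = 2 * sseq f (tsel f (n/2)) + 2 := by
        have hmod : (2 * tsel f (n / 2) + 1) % 2 = 1 := by omega
        have hdiv : (2 * tsel f (n/2) + 1) / 2 = tsel f (n/2) := by omega
        simp [Wt, hmod, hdiv]
      have h2 : Wt f n = n + 1 := by simp [Wt, he]
      omega
    · rename_i ho
      match hj : n / 2, hm with
      | 0, hm => simp [wv] at hm
      | (j+1), hm =>
        obtain ⟨i, hi, rfl⟩ := relv_support f j _ (by simpa [wv] using hm)
        have h1 : Wt f (2 * i) = 2 * i + 1 := by simp [Wt, Nat.mul_mod_right]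
        have h2 : Wt f n = 2 * sseq f (n / 2) + 2 := by
          have hmod : n % 2 = 1 := by omega
          simp [Wt, hmod]
        have h3 : Sb f j < sseq f (j+1) := by simp [sseq]
        rw [hj, Nat.succ_eq_add_one] at h2
        omega

def wt (f : ℕ × ℕ → ℕ) (v : ℕ →₀ ℤ) : ℕ := v.support.sup (Wt f)

lemma wt_eq_zero (f : ℕ × ℕ → ℕ) {v : ℕ →₀ ℤ} (h : wt f v = 0) : v = 0 := by
  by_contra hv
  obtain ⟨n, hn⟩ := Finsupp.support_nonempty_iff.mpr hv
  have := Finset.le_sup (f := Wt f) hn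
  have := Wt_pos f n
  unfold wt at h
  omega

lemma nu_support (f : ℕ × ℕ → ℕ) (v : ℕ →₀ ℤ) :
    ∀ m ∈ (nu f v).support, ∃ n ∈ v.support, Wt f m < Wt f n := by
  intro m hm
  classical
  have hv : nu f v = v.sum fun n c => c • nub f n := by
    simp [nu, Finsupp.liftAddHom_apply]; rfl
  rw [hv] at hm
  have := Finsupp.support_sum hm
  obtain ⟨n, hn, hmn⟩ := Finset.mem_biUnion.mp this
  exact ⟨n, hn, nub_wt f n m (Finsupp.support_smul hmn)⟩

lemma wt_nu_le (f : ℕ × ℕ → ℕ) {v : ℕ →₀ ℤ} {K : ℕ} (h : wt f v ≤ K + 1) :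
    wt f (nu f v) ≤ K := by
  apply Finset.sup_le
  intro m hm
  obtain ⟨n, hn, hlt⟩ := nu_support f v m hm
  have := Finset.le_sup (f := Wt f) hn
  unfold wt at h
  omega

lemma nu_iter_zero (f : ℕ × ℕ → ℕ) :
    ∀ (K : ℕ) (v : ℕ →₀ ℤ), wt f v ≤ K → (⇑(nu f))^[K] v = 0 := by
  intro K
  induction K with
  | zero => intro v hv; simpa using wt_eq_zero f (by omega)
  | succ K ih =>
    intro v hv
    rw [Function.iterate_succ_apply]
    exact ih _ (wt_nu_le f hv)

def phi (f : ℕ × ℕ → ℕ) (v : ℕ →₀ ℤ) : (ℕ →₀ ℤ) := v + nu f v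

lemma phi_add (f : ℕ × ℕ → ℕ) (v w : ℕ →₀ ℤ) : phi f (v + w) = phi f v + phi f w := by
  simp [phi, map_add]; abel

lemma phi_zsmul (f : ℕ × ℕ → ℕ) (c : ℤ) (v : ℕ →₀ ℤ) : phi f (c • v) = c • phi f v := by
  simp [phi, map_zsmul, smul_add]

lemma phi_sub (f : ℕ × ℕ → ℕ) (v w : ℕ →₀ ℤ) : phi f (v - w) = phi f v - phi f w := by
  simp [phi, map_sub]; abel

lemma phi_injective (f : ℕ × ℕ → ℕ) : Function.Injective (phi f) := by
  have key : ∀ u : ℕ →₀ ℤ, phi f u = 0 → u = 0 := by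
    intro u hu
    by_contra hne
    have h1 : nu f u = -u := by
      rw [phi] at hu
      linear_combination (norm := abel_nf) hu
    have hwne : wt f (-u) = wt f u := by
      unfold wt; rw [Finsupp.support_neg]
    have hpos : 1 ≤ wt f u := by
      rcases Nat.eq_zero_or_pos (wt f u) with h | h
      · exact absurd (wt_eq_zero f h) hne
      · omega
    have hle : wt f (nu f u) ≤ wt f u - 1 := by
      apply wt_nu_le
      omega
    rw [h1, hwne] at hle
    omega
  intro v w hvw
  have h0 : phi f (v - w) = 0 := by rw [phi_sub, hvw, sub_self]
  exact sub_eq_zero.mp (key _ h0)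

lemma phi_surjective (f : ℕ × ℕ → ℕ) : Function.Surjective (phi f) := by
  intro w
  refine ⟨(Finset.range (wt f w + 1)).sum (fun k => ((-1)^k : ℤ) • (⇑(nu f))^[k] w), ?_⟩
  have key : ∀ N : ℕ, phi f ((Finset.range (N + 1)).sum (fun k => ((-1)^k : ℤ) • (⇑(nu f))^[k] w))
      = w + ((-1)^N : ℤ) • (⇑(nu f))^[N+1] w := by
    intro N
    induction N with
    | zero => simp [phi]
    | succ N ih =>
      rw [Finset.sum_range_succ, phi_add, ih, phi_zsmul]
      rw [phi]
      rw [pow_succ]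
      have e1 : (⇑(nu f))^[N + 1 + 1] w = nu f ((⇑(nu f))^[N+1] w) :=
        Function.iterate_succ_apply' _ _ _
      have e2 : (⇑(nu f))^[N + 1] w = nu f ((⇑(nu f))^[N] w) :=
        Function.iterate_succ_apply' _ _ _
      rw [e1, e2]
      simp [smul_add, neg_smul]
  rw [key]
  have hz : (⇑(nu f))^[wt f w + 1] w = 0 := by
    rw [Function.iterate_succ_apply']
    rw [nu_iter_zero f (wt f w) w le_rfl]
    simp
  rw [hz]
  simp

/-! ### The coded group `G` -/

structure GcT (f : ℕ × ℕ → ℕ) (hf : f ∈ AGCode) where val : ℕ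

variable (f : ℕ × ℕ → ℕ) (hf : f ∈ AGCode)

def gE : ℕ := Classical.choose hf.1.2

lemma gE_spec : (∀ a, f (gE f hf, a) = a ∧ f (a, gE f hf) = a) ∧
    ∀ a, ∃ b, f (a, b) = gE f hf ∧ f (b, a) = gE f hf := Classical.choose_spec hf.1.2

def gInv (a : ℕ) : ℕ := Classical.choose ((gE_spec f hf).2 a)

instance : Add (GcT f hf) := ⟨fun a b => ⟨f (a.val, b.val)⟩⟩
instance : Zero (GcT f hf) := ⟨⟨gE f hf⟩⟩
instance : Neg (GcT f hf) := ⟨fun a => ⟨gInv f hf a.val⟩⟩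

noncomputable instance : AddCommGroup (GcT f hf) :=
  { AddGroup.ofLeftAxioms
      (fun a b c => congrArg GcT.mk (hf.1.1 a.val b.val c.val))
      (fun a => congrArg GcT.mk (((gE_spec f hf).1 a.val).1))
      (fun a => congrArg GcT.mk ((Classical.choose_spec ((gE_spec f hf).2 a.val)).2)) with
    add_comm := fun a b => congrArg GcT.mk (hf.2 a.val b.val) }

lemma gc_add (a b : GcT f hf) : (a + b).val = f (a.val, b.val) := rfl
lemma gc_zero : (0 : GcT f hf).val = gE f hf := rfl
lemma gc_mk_add (a b : ℕ) : (GcT.mk (hf := hf) a) + GcT.mk b = GcT.mk (f (a, b)) := rfl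

def chi (n : ℕ) : GcT f hf := if n % 2 = 0 then ⟨n / 2⟩ else 0

def pihat : (ℕ →₀ ℤ) →+ GcT f hf :=
  Finsupp.liftAddHom (fun n => zmultiplesHom _ (chi f hf n))

lemma pihat_single (n : ℕ) (c : ℤ) :
    pihat f hf (Finsupp.single n c) = c • chi f hf n := by
  simp [pihat, Finsupp.liftAddHom_apply_single]


/-! ### kernel of `pihat` equals range of `nu` -/

/-- generator vector attached to a group element -/
def XG (x : GcT f hf) : (ℕ →₀ ℤ) := Finsupp.single (2 * x.val) 1

lemma mem_range_relv (j : ℕ) : relv f j ∈ (nu f).range := by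
  refine ⟨Finsupp.single (2*(j+1)+1) 1, ?_⟩
  rw [nu_single, one_smul, nub]
  have h1 : ¬ (2*(j+1)+1 = 0) := by omega
  have h2 : ¬ ((2*(j+1)+1) % 2 = 0) := by omega
  have h3 : (2*(j+1)+1) / 2 = j + 1 := by omega
  rw [if_neg h1, if_neg h2, h3]
  rfl

lemma mem_range_z (j : ℕ) (c : ℤ) : Finsupp.single (2*j+1) c ∈ (nu f).range := by
  refine ⟨Finsupp.single (2*(sseq f j + 1)) c, ?_⟩
  rw [nu_single, nub]
  have h1 : ¬ (2*(sseq f j + 1) = 0) := by omega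
  have h2 : (2*(sseq f j + 1)) % 2 = 0 := by omega
  have h3 : (2*(sseq f j + 1)) / 2 = sseq f j + 1 := by omega
  rw [if_neg h1, if_pos h2, h3, tsel_surj]
  rw [Finsupp.smul_single]; simp

lemma mem_range_step (x y : GcT f hf) :
    XG f hf x + XG f hf y - XG f hf (x + y) ∈ (nu f).range := by
  have := mem_range_relv f (Nat.pair x.val y.val)
  have heq : relv f (Nat.pair x.val y.val)
      = XG f hf x + XG f hf y - XG f hf (x + y) := by
    rw [relv, Nat.unpair_pair]
    rfl
  rwa [heq] at this

lemma mem_range_XG0 : XG f hf 0 ∈ (nu f).range := by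
  have := mem_range_step f hf 0 0
  rwa [add_zero, add_sub_cancel_right] at this

lemma mem_range_single_sub (c : ℤ) (x : GcT f hf) :
    Finsupp.single (2 * x.val) c - XG f hf (c • x) ∈ (nu f).range := by
  induction c using Int.induction_on with
  | zero =>
    rw [zero_zsmul]
    simp only [Finsupp.single_zero, zero_sub]
    exact neg_mem (mem_range_XG0 f hf)
  | succ i ih =>
    have hstep := mem_range_step f hf ((i:ℤ) • x) x
    have hz : ((i:ℤ) • x) + x = ((i:ℤ)+1) • x := by rw [add_zsmul, one_zsmul]
    rw [hz] at hstep
    have heq : Finsupp.single (2 * x.val) ((i:ℤ)+1) - XG f hf (((i:ℤ)+1) • x)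
        = (Finsupp.single (2 * x.val) (i:ℤ) - XG f hf ((i:ℤ) • x))
          + (XG f hf ((i:ℤ) • x) + XG f hf x - XG f hf (((i:ℤ)+1) • x)) := by
      rw [Finsupp.single_add]
      show _ = _
      unfold XG
      abel
    rw [heq]
    exact add_mem ih hstep
  | pred i ih =>
    have hstep := mem_range_step f hf ((-(i:ℤ)-1) • x) x
    have hz : ((-(i:ℤ)-1) • x) + x = (-(i:ℤ)) • x := by
      have h' : (-(i:ℤ)) = (-(i:ℤ)-1) + 1 := by ring
      conv_rhs => rw [h', add_zsmul, one_zsmul]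
    rw [hz] at hstep
    have heq : Finsupp.single (2 * x.val) (-(i:ℤ)-1) - XG f hf ((-(i:ℤ)-1) • x)
        = (Finsupp.single (2 * x.val) (-(i:ℤ)) - XG f hf ((-(i:ℤ)) • x))
          - (XG f hf ((-(i:ℤ)-1) • x) + XG f hf x - XG f hf ((-(i:ℤ)) • x)) := by
      have : Finsupp.single (2 * x.val) (-(i:ℤ)-1)
          = Finsupp.single (2 * x.val) (-(i:ℤ)) - Finsupp.single (2 * x.val) 1 := by
        rw [← Finsupp.single_sub]
      rw [this]
      unfold XG
      abel
    rw [heq]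
    exact sub_mem ih hstep

lemma chi_even (g : ℕ) : chi f hf (2 * g) = ⟨g⟩ := by
  unfold chi
  rw [if_pos (by omega)]
  congr 1
  omega

lemma pihat_nub (n : ℕ) : pihat f hf (nub f n) = 0 := by
  unfold nub
  split
  · exact map_zero _
  · split
    · rename_i h0 he
      rw [pihat_single, one_smul, chi]
      rw [if_neg (by omega)]
    · rename_i h0 ho
      match n / 2 with
      | 0 => exact map_zero _
      | (j+1) =>
        show pihat f hf (relv f j) = 0
        rw [relv]
        rw [map_sub, map_add, pihat_single, pihat_single, pihat_single]
        rw [one_smul, one_smul, one_smul, chi_even, chi_even, chi_even]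
        rw [sub_eq_zero]
        exact (gc_mk_add f hf _ _).symm

lemma pihat_nu (v : ℕ →₀ ℤ) : pihat f hf (nu f v) = 0 := by
  have hv : nu f v = v.sum fun n c => c • nub f n := by
    simp [nu, Finsupp.liftAddHom_apply]; rfl
  rw [hv, map_finsuppSum]
  apply Finset.sum_eq_zero
  intro n _
  show pihat f hf ((v n) • nub f n) = 0
  rw [map_zsmul, pihat_nub, smul_zero]

lemma main_sub (v : ℕ →₀ ℤ) : v - XG f hf (pihat f hf v) ∈ (nu f).range := by
  induction v using Finsupp.induction with
  | zero =>
    rw [map_zero, zero_sub]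
    exact neg_mem (mem_range_XG0 f hf)
  | single_add n c w hn hc ih =>
    rw [map_add, pihat_single]
    rcases Nat.even_or_odd n with he | ho
    · -- n even
      obtain ⟨g, rfl⟩ := he
      have hg : g + g = 2 * g := by omega
      rw [hg] at *
      rw [chi_even]
      have heq : Finsupp.single (2*g) c + w - XG f hf (c • GcT.mk (hf := hf) g + pihat f hf w)
          = (Finsupp.single (2*g) c - XG f hf (c • ⟨g⟩))
            + (w - XG f hf (pihat f hf w))
            + (XG f hf (c • ⟨g⟩) + XG f hf (pihat f hf w)
                - XG f hf (c • GcT.mk (hf := hf) g + pihat f hf w)) := by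
        abel
      rw [heq]
      exact add_mem (add_mem (mem_range_single_sub f hf c ⟨g⟩) ih)
        (mem_range_step f hf _ _)
    · -- n odd
      obtain ⟨j, rfl⟩ := ho
      have hchi : chi f hf (2*j+1) = 0 := by unfold chi; rw [if_neg (by omega)]
      rw [hchi, smul_zero, zero_add]
      have heq : Finsupp.single (2*j+1) c + w - XG f hf (pihat f hf w)
          = Finsupp.single (2*j+1) c + (w - XG f hf (pihat f hf w)) := by abel
      rw [heq]
      exact add_mem (mem_range_z f j c) ih

theorem ker_iff (v : ℕ →₀ ℤ) : pihat f hf v = 0 ↔ v ∈ (nu f).range := by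
  constructor
  · intro h
    have h1 := main_sub f hf v
    rw [h] at h1
    have : v = (v - XG f hf 0) + XG f hf 0 := by abel
    rw [this]
    exact add_mem h1 (mem_range_XG0 f hf)
  · rintro ⟨w, rfl⟩
    exact pihat_nu f hf w


/-! ### the code-level construction -/

end StmtAux

namespace StmtAux

/-- group code of the free abelian group `ℕ →₀ ℤ`, transported along `enc` -/
def hcode : ℕ × ℕ → ℕ := fun p => enc (enc.symm p.1 + enc.symm p.2)

/-- the automorphism `φ = 1 + ν`, transported along `enc` -/
def sig (f : ℕ × ℕ → ℕ) : ℕ → ℕ := fun a => enc (phi f (enc.symm a))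

lemma hcode_apply (a b : ℕ) : hcode (a, b) = enc (enc.symm a + enc.symm b) := rfl

lemma hcode_AG : hcode ∈ AGCode := by
  refine ⟨⟨?_, enc 0, ?_, ?_⟩, ?_⟩
  · intro a b c
    simp [hcode, Equiv.symm_apply_apply, add_assoc]
  · intro a
    simp [hcode, Equiv.symm_apply_apply, Equiv.apply_symm_apply]
  · intro a
    exact ⟨enc (-enc.symm a), by simp [hcode, Equiv.symm_apply_apply], by
      simp [hcode, Equiv.symm_apply_apply]⟩
  · intro a b
    simp [hcode, add_comm]

lemma hcode_id : IsIdentityOf hcode (enc 0) := by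
  intro a
  constructor <;> simp [hcode, Equiv.symm_apply_apply, Equiv.apply_symm_apply]

lemma codePow_hcode (x : ℕ) (n : ℕ) :
    codePow hcode x n = enc ((n+1) • enc.symm x) := by
  induction n with
  | zero => simp [codePow, one_nsmul, Equiv.apply_symm_apply]
  | succ n ih =>
    rw [codePow, ih, hcode_apply, Equiv.symm_apply_apply]
    congr 1
    conv_rhs => rw [succ_nsmul]
    exact add_comm _ _

lemma hcode_TF : hcode ∈ AGTFCode := by
  refine ⟨hcode_AG, ?_⟩
  intro e he x n hpow
  have he0 : e = enc 0 := by
    have h1 := (he (enc 0)).1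
    rw [hcode_apply] at h1
    simp only [Equiv.symm_apply_apply, add_zero] at h1
    rw [Equiv.apply_symm_apply] at h1
    exact h1
  subst he0
  rw [codePow_hcode] at hpow
  have h2 : (n+1) • enc.symm x = 0 := enc.injective hpow
  have h3 : enc.symm x = 0 := by
    ext m
    have := congrArg (fun v => v m) h2
    simp only [Finsupp.smul_apply, Finsupp.coe_zero, Pi.zero_apply] at this
    have hmul : ((n+1) : ℤ) * (enc.symm x) m = 0 := by
      rw [← this]; push_cast [nsmul_eq_mul]; ring
    rcases mul_eq_zero.mp hmul with h | h
    · exfalso; omega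
    · exact h
  rw [← h3, Equiv.apply_symm_apply]

variable (f : ℕ × ℕ → ℕ) (hf : f ∈ AGCode)

lemma sig_hom : IsHomCode hcode hcode (sig f) := by
  intro a b
  simp only [sig, hcode_apply, Equiv.symm_apply_apply]
  rw [phi_add]

lemma sig_bij : Function.Bijective (sig f) := by
  have : sig f = enc ∘ (phi f) ∘ enc.symm := rfl
  rw [this]
  exact Function.Bijective.comp enc.bijective
    (Function.Bijective.comp ⟨phi_injective f, phi_surjective f⟩ enc.symm.bijective)

/-- the quotient homomorphism on codes -/
def pic : ℕ → ℕ := fun a => (pihat f hf (enc.symm a)).val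

lemma pic_hom : IsHomCode hcode f (pic f hf) := by
  intro a b
  simp only [pic, hcode_apply, Equiv.symm_apply_apply]
  rw [map_add]
  exact gc_add f hf _ _

lemma pic_surj : Function.Surjective (pic f hf) := by
  intro m
  refine ⟨enc (Finsupp.single (2*m) 1), ?_⟩
  simp only [pic, Equiv.symm_apply_apply]
  rw [pihat_single, one_smul, chi_even]

lemma gcval_inj (x y : GcT f hf) (h : x.val = y.val) : x = y := by
  cases x; cases y; simpa using h

lemma pic_ker (x : ℕ) :
    pic f hf x = gE f hf ↔ ∃ y, x = hcode (y, enc (-enc.symm (sig f y))) := by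
  have lhs_iff : pic f hf x = gE f hf ↔ enc.symm x ∈ (nu f).range := by
    show (pihat f hf (enc.symm x)).val = gE f hf ↔ _
    rw [← gc_zero f hf]
    constructor
    · intro h
      exact (ker_iff f hf _).mp (gcval_inj f hf _ _ h)
    · intro h
      rw [(ker_iff f hf _).mpr h]
  rw [lhs_iff]
  constructor
  · rintro ⟨w, hw⟩
    refine ⟨enc (-w), ?_⟩
    rw [hcode_apply]
    simp only [sig, Equiv.symm_apply_apply]
    have : -w + -(phi f (-w)) = nu f w := by
      rw [phi]
      rw [map_neg]
      abel
    rw [this, hw, Equiv.apply_symm_apply]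
  · rintro ⟨y, rfl⟩
    rw [hcode_apply]
    simp only [sig, Equiv.symm_apply_apply]
    refine ⟨-(enc.symm y), ?_⟩
    rw [map_neg, phi]
    abel


/-! ### measurability -/

end StmtAux

namespace StmtAux

lemma meas_of_finset (g : (ℕ × ℕ → ℕ) → ℕ) (s : Finset (ℕ × ℕ))
    (hg : ∀ f f', (∀ p ∈ s, f p = f' p) → g f = g f') : Measurable g := by
  classical
  apply measurable_to_countable
  intro y
  let ext : (↥s → ℕ) → (ℕ × ℕ → ℕ) := fun σ p => if h : p ∈ s then σ ⟨p, h⟩ else 0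
  have hset : g ⁻¹' {g y} = ⋃ (σ : {σ : ↥s → ℕ // g (ext σ) = g y}),
      ⋂ p ∈ (s : Set (ℕ × ℕ)), {f : ℕ × ℕ → ℕ | f p = ext σ.1 p} := by
    ext f
    simp only [Set.mem_preimage, Set.mem_singleton_iff, Set.mem_iUnion, Set.mem_iInter,
      Set.mem_setOf_eq]
    constructor
    · intro hfy
      refine ⟨⟨fun p => f p.1, ?_⟩, ?_⟩
      · rw [← hfy]
        apply hg
        intro p hp
        simp [ext, hp]
      · intro p hp
        have hp' : p ∈ s := hp
        simp [ext, hp']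
    · rintro ⟨σ, hσ⟩
      rw [← σ.2]
      apply hg
      intro p hp
      exact hσ p hp
  rw [hset]
  apply MeasurableSet.iUnion
  intro σ
  apply MeasurableSet.biInter (s.countable_toSet)
  intro p _
  exact (measurable_pi_apply p) (measurableSet_singleton _)

section congr

variable (f f' : ℕ × ℕ → ℕ) (N : ℕ)
variable (h : ∀ i < N, f (Nat.unpair i) = f' (Nat.unpair i))
include h

lemma relv_congr (j : ℕ) (hj : j < N) : relv f j = relv f' j := by
  unfold relv; rw [h j hj]

lemma Sb_congr (j : ℕ) (hj : j < N) : Sb f j = Sb f' j := by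
  unfold Sb; rw [h j hj]

lemma sseq_congr : ∀ j, j ≤ N → sseq f j = sseq f' j := by
  intro j
  induction j with
  | zero => intro _; rfl
  | succ j ih =>
    intro hj
    show max (sseq f j) (Sb f j) + 1 = max (sseq f' j) (Sb f' j) + 1
    rw [ih (by omega), Sb_congr f f' N h j (by omega)]

lemma tsel_congr (m : ℕ) (hm : m ≤ N) : tsel f m = tsel f' m := by
  unfold tsel
  have key : ∀ (n : ℕ), n ≤ N →
      Nat.findGreatest (fun j => sseq f j < m) n = Nat.findGreatest (fun j => sseq f' j < m) n := by
    intro n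
    induction n with
    | zero => intro _; rfl
    | succ n ih =>
      intro hn
      rw [Nat.findGreatest_succ, Nat.findGreatest_succ]
      rw [sseq_congr f f' N h (n+1) hn, ih (by omega)]
  exact key m hm

lemma nub_congr (n : ℕ) (hn : n ≤ N) : nub f n = nub f' n := by
  unfold nub
  rcases eq_or_ne n 0 with rfl | h0
  · simp
  · rw [if_neg h0, if_neg h0]
    by_cases he : n % 2 = 0
    · rw [if_pos he, if_pos he, tsel_congr f f' N h (n/2) (by omega)]
    · rw [if_neg he, if_neg he]
      match hj : n / 2 with
      | 0 => rfl
      | (j+1) =>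
        show relv f j = relv f' j
        exact relv_congr f f' N h j (by omega)

lemma nu_congr (v : ℕ →₀ ℤ) (hv : ∀ n ∈ v.support, n < N) : nu f v = nu f' v := by
  have e1 : nu f v = v.sum fun n c => c • nub f n := by
    simp [nu, Finsupp.liftAddHom_apply]; rfl
  have e2 : nu f' v = v.sum fun n c => c • nub f' n := by
    simp [nu, Finsupp.liftAddHom_apply]; rfl
  rw [e1, e2]
  apply Finset.sum_congr rfl
  intro n hn
  show (v n) • nub f n = (v n) • nub f' n
  rw [nub_congr f f' N h n (le_of_lt (hv n hn))]

end congr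

lemma sig_meas : Measurable (fun f => sig f) := by
  apply measurable_pi_iff.mpr
  intro a
  set N : ℕ := ((enc.symm a).support.sup id) + 1 with hN
  apply meas_of_finset _ ((Finset.range N).image Nat.unpair)
  intro f f' hs
  have h : ∀ i < N, f (Nat.unpair i) = f' (Nat.unpair i) := by
    intro i hi
    exact hs _ (Finset.mem_image_of_mem _ (Finset.mem_range.mpr hi))
  simp only [sig, phi]
  rw [nu_congr f f' N h (enc.symm a) ?_]
  intro n hn
  have := Finset.le_sup (f := id) hn
  simp only [id] at this
  omega


end StmtAux

end StmtAux

/-- There is a Borel function `𝒜𝒢 → 𝒜𝒢_TF × ℕ^ℕ` assigning to every countable abelian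
group `G` a pair `(H, α)` where `H` is a torsion-free abelian group and `α` is an
automorphism of `H` with `H / (id_H − α)[H] ≅ G`.  The isomorphism of the quotient with
`G` is encoded by a surjective homomorphism `π : H → G` whose kernel is the image of
`id_H − α`, i.e. (written multiplicatively) `π x = e_G ↔ ∃ y, x = y · (α y)⁻¹`. -/
theorem stmt5 :
    ∃ F : (ℕ × ℕ → ℕ) → (ℕ × ℕ → ℕ) × (ℕ → ℕ), Measurable F ∧
      ∀ f ∈ AGCode,
        (F f).1 ∈ AGTFCode ∧
        IsHomCode (F f).1 (F f).1 (F f).2 ∧ Function.Bijective (F f).2 ∧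
        ∃ (π : ℕ → ℕ) (eG eH : ℕ) (inv : ℕ → ℕ),
          IsIdentityOf f eG ∧ IsIdentityOf (F f).1 eH ∧
          (∀ y, (F f).1 (y, inv y) = eH ∧ (F f).1 (inv y, y) = eH) ∧
          IsHomCode (F f).1 f π ∧ Function.Surjective π ∧
          ∀ x, π x = eG ↔ ∃ y, x = (F f).1 (y, inv ((F f).2 y)) := by
  classical
  refine ⟨fun f => (StmtAux.hcode, StmtAux.sig f), ?_, ?_⟩
  · exact Measurable.prodMk measurable_const StmtAux.sig_meas
  · intro f hf
    refine ⟨StmtAux.hcode_TF, StmtAux.sig_hom f, StmtAux.sig_bij f,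
      StmtAux.pic f hf, StmtAux.gE f hf, StmtAux.enc 0,
      fun a => StmtAux.enc (-StmtAux.enc.symm a),
      (StmtAux.gE_spec f hf).1, StmtAux.hcode_id, ?_,
      StmtAux.pic_hom f hf, StmtAux.pic_surj f hf, ?_⟩
    · intro y
      constructor <;> simp [StmtAux.hcode, Equiv.symm_apply_apply]
    · intro x
      exact StmtAux.pic_ker f hf x
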